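/- The zigzag algebra A(Γ) is a finite-dimensional ℂ-algebra, and its dimension over ℂ equals 2·|V| + 2·|E|, where |V| is the number of vertices and |E| the number of edges of Γ. -/

import Mathlib

/-!
The zigzag algebra `A(Γ)` of a finite simple graph `Γ`, presented as a quotient of the
free algebra on generators `{e_a : a ∈ V} ∪ {x_{ab} : a,b adjacent}`.
-/

noncomputable section

/-- Generators of the zigzag algebra: one idempotent `e_a` per vertex `a`, and one
generator `x_{ab}` (the arrow `a → b` in the double quiver) per ordered adjacent pair. -/
def ZigzagGen {V : Type} (G : SimpleGraph V) : Type :=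
  V ⊕ {p : V × V // G.Adj p.1 p.2}

/-- The idempotent generator `e_a` inside the free algebra. -/
def zge (k : Type) [CommRing k] {V : Type} (G : SimpleGraph V) (a : V) :
    FreeAlgebra k (ZigzagGen G) :=
  FreeAlgebra.ι k (Sum.inl a)

/-- The arrow generator `x_{ab}` inside the free algebra. -/
def zgx (k : Type) [CommRing k] {V : Type} (G : SimpleGraph V) {a b : V} (h : G.Adj a b) :
    FreeAlgebra k (ZigzagGen G) :=
  FreeAlgebra.ι k (Sum.inr ⟨(a, b), h⟩)

/-- The defining relations of the zigzag algebra `A(Γ)`: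
`e_a e_b = δ_{ab} e_a`, `Σ_a e_a = 1`, `e_b x_{ab} = x_{ab} = x_{ab} e_a`,
`x_{bc} x_{ab} = 0` for `c ≠ a`, and `x_{ba} x_{ab} = x_{ca} x_{ac}`. -/
inductive ZigzagRel (k : Type) [CommRing k] {V : Type} [Fintype V] (G : SimpleGraph V) :
    FreeAlgebra k (ZigzagGen G) → FreeAlgebra k (ZigzagGen G) → Prop
  | idem (a : V) : ZigzagRel k G (zge k G a * zge k G a) (zge k G a)
  | orth (a b : V) (h : a ≠ b) : ZigzagRel k G (zge k G a * zge k G b) 0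
  | sum_one : ZigzagRel k G (∑ a : V, zge k G a) 1
  | target_id {a b : V} (h : G.Adj a b) :
      ZigzagRel k G (zge k G b * zgx k G h) (zgx k G h)
  | source_id {a b : V} (h : G.Adj a b) :
      ZigzagRel k G (zgx k G h * zge k G a) (zgx k G h)
  | comp_zero {a b c : V} (h₁ : G.Adj a b) (h₂ : G.Adj b c) (hca : c ≠ a) :
      ZigzagRel k G (zgx k G h₂ * zgx k G h₁) 0
  | zigzag {a b c : V} (hab : G.Adj a b) (hac : G.Adj a c) :
      ZigzagRel k G (zgx k G hab.symm * zgx k G hab) (zgx k G hac.symm * zgx k G hac)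

/-- The zigzag algebra `A(Γ)`. -/
abbrev ZigzagAlgebra (k : Type) [CommRing k] {V : Type} [Fintype V] (G : SimpleGraph V) : Type :=
  RingQuot (ZigzagRel k G)

/-- The idempotent `e_a` of the zigzag algebra. -/
def ZigzagAlgebra.e (k : Type) [CommRing k] {V : Type} [Fintype V] (G : SimpleGraph V)
    (a : V) : ZigzagAlgebra k G :=
  RingQuot.mkAlgHom k (ZigzagRel k G) (zge k G a)


namespace ZZ

variable {V : Type} [Fintype V] [DecidableEq V] (G : SimpleGraph V) [DecidableRel G.Adj]

abbrev D := {p : V × V // G.Adj p.1 p.2}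

abbrev I := V ⊕ (V ⊕ D G)

/-- matrix of a partial map on the basis -/
def pm (f : I G → Option (I G)) : Matrix (I G) (I G) ℂ :=
  Matrix.of fun j i => if f i = some j then 1 else 0

lemma pm_mul (f g : I G → Option (I G)) :
    pm G f * pm G g = pm G fun i => (g i).bind f := by
  ext j i
  simp only [Matrix.mul_apply, pm, Matrix.of_apply]
  have key : ∀ o : Option (I G),
      (∑ x : I G, (if f x = some j then 1 else 0 : ℂ) * if o = some x then 1 else 0) =
        if o.bind f = some j then 1 else 0 := by
    rintro (_ | k)
    · simp
    · rw [Finset.sum_eq_single k]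
      · simp
      · intro b _ hb
        simp [Option.some_inj, hb, Ne.symm hb]
      · simp
  exact key (g i)

lemma pm_none : pm G (fun _ => none) = 0 := by
  ext j i; simp [pm]

def tgt : I G → V
  | .inl a => a
  | .inr (.inl a) => a
  | .inr (.inr p) => p.1.2

def Fe (a : V) : I G → Option (I G) := fun i => if tgt G i = a then some i else none

def Fx (p : D G) : I G → Option (I G)
  | .inl c => if c = p.1.1 then some (.inr (.inr p)) else none
  | .inr (.inl _) => none
  | .inr (.inr q) => if q.1 = (p.1.2, p.1.1) then some (.inr (.inl p.1.2)) else none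

def rho : ZigzagGen G → Matrix (I G) (I G) ℂ
  | .inl a => pm G (Fe G a)
  | .inr p => pm G (Fx G p)

lemma pm_congr {f g : I G → Option (I G)} (h : ∀ i, f i = g i) : pm G f = pm G g :=
  congrArg (pm G) (funext h)

lemma M_idem (a : V) : pm G (Fe G a) * pm G (Fe G a) = pm G (Fe G a) := by
  rw [pm_mul]
  refine pm_congr G fun i => ?_
  by_cases h : tgt G i = a <;> simp [Fe, h]

lemma M_orth (a b : V) (h : a ≠ b) : pm G (Fe G a) * pm G (Fe G b) = 0 := by
  rw [pm_mul, ← pm_none G]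
  refine pm_congr G fun i => ?_
  by_cases hb : tgt G i = b
  · have ha : tgt G i ≠ a := fun ha => h (ha ▸ hb ▸ rfl)
    simp [Fe, hb, ha, Ne.symm h]
  · simp [Fe, hb]

lemma M_sum : (∑ a : V, pm G (Fe G a)) = 1 := by
  ext j i
  simp only [Matrix.sum_apply, pm, Fe, Matrix.of_apply, Matrix.one_apply]
  rw [Finset.sum_eq_single (tgt G i)]
  · by_cases h : i = j <;> simp [h, Ne.symm]
  · intro b _ hb
    simp [Ne.symm hb]
  · simp

lemma M_target {a b : V} (h : G.Adj a b) :
    pm G (Fe G b) * pm G (Fx G ⟨(a, b), h⟩) = pm G (Fx G ⟨(a, b), h⟩) := by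
  rw [pm_mul]
  refine pm_congr G fun i => ?_
  rcases i with c | c | q
  · by_cases hc : c = a <;> simp [Fx, Fe, hc, tgt]
  · simp [Fx]
  · by_cases hq : q.1 = (b, a) <;> simp [Fx, Fe, hq, tgt]

lemma M_source {a b : V} (h : G.Adj a b) :
    pm G (Fx G ⟨(a, b), h⟩) * pm G (Fe G a) = pm G (Fx G ⟨(a, b), h⟩) := by
  rw [pm_mul]
  refine pm_congr G fun i => ?_
  rcases i with c | c | q
  · by_cases hc : c = a <;> simp [Fx, Fe, hc, tgt]
  · by_cases hc : c = a <;> simp [Fx, Fe, hc, tgt]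
  · by_cases hq2 : q.1.2 = a
    · simp [Fx, Fe, hq2, tgt]
    · have hq : q.1 ≠ (b, a) := fun hh => hq2 (by rw [hh])
      simp [Fx, Fe, hq2, hq, tgt]

lemma M_comp {a b c : V} (h₁ : G.Adj a b) (h₂ : G.Adj b c) (hca : c ≠ a) :
    pm G (Fx G ⟨(b, c), h₂⟩) * pm G (Fx G ⟨(a, b), h₁⟩) = 0 := by
  rw [pm_mul, ← pm_none G]
  refine pm_congr G fun i => ?_
  rcases i with d | d | q
  · by_cases hd : d = a <;> simp [Fx, hd, Prod.ext_iff, Ne.symm hca]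
  · simp [Fx]
  · by_cases hq : q.1 = (b, a) <;> simp [Fx, hq]

lemma M_zigzag {a b : V} (h : G.Adj a b) :
    pm G (Fx G ⟨(b, a), h.symm⟩) * pm G (Fx G ⟨(a, b), h⟩) =
      pm G (fun i => if i = .inl a then some (.inr (.inl a)) else none) := by
  rw [pm_mul]
  refine pm_congr G fun i => ?_
  rcases i with d | d | q
  · by_cases hd : d = a <;> simp [Fx, hd]
  · simp [Fx]
  · by_cases hq : q.1 = (b, a) <;> simp [Fx, hq]

lemma lift_zge (a : V) : FreeAlgebra.lift ℂ (rho G) (zge ℂ G a) = pm G (Fe G a) :=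
  FreeAlgebra.lift_ι_apply _ _

lemma lift_zgx {a b : V} (h : G.Adj a b) :
    FreeAlgebra.lift ℂ (rho G) (zgx ℂ G h) = pm G (Fx G ⟨(a, b), h⟩) :=
  FreeAlgebra.lift_ι_apply _ _

/-- the representation of the zigzag algebra by partial-map matrices -/
def phi : ZigzagAlgebra ℂ G →ₐ[ℂ] Matrix (I G) (I G) ℂ :=
  RingQuot.liftAlgHom ℂ ⟨FreeAlgebra.lift ℂ (rho G), by
    intro x y r
    induction r with
    | idem a => simpa [lift_zge] using M_idem G a
    | orth a b h => simpa [lift_zge] using M_orth G a b h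
    | sum_one => simpa [lift_zge] using M_sum G
    | target_id h => simpa [lift_zge, lift_zgx] using M_target G h
    | source_id h => simpa [lift_zge, lift_zgx] using M_source G h
    | comp_zero h₁ h₂ hca => simpa [lift_zgx] using M_comp G h₁ h₂ hca
    | zigzag hab hac =>
        simpa [lift_zgx] using (M_zigzag G hab).trans (M_zigzag G hac).symm⟩

lemma phi_mk (z : FreeAlgebra ℂ (ZigzagGen G)) :
    phi G (RingQuot.mkAlgHom ℂ (ZigzagRel ℂ G) z) = FreeAlgebra.lift ℂ (rho G) z :=
  RingQuot.liftAlgHom_mkAlgHom_apply _ _ _ _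

def u : I G → ℂ := Sum.elim (fun _ => 1) (fun _ => 0)

def psi : ZigzagAlgebra ℂ G →ₗ[ℂ] (I G → ℂ) where
  toFun z := (phi G z).mulVec (u G)
  map_add' x y := by rw [map_add, Matrix.add_mulVec]
  map_smul' c x := by rw [map_smul, Matrix.smul_mulVec]; rfl

lemma psE (a : V) : (pm G (Fe G a)).mulVec (u G) = Pi.single (Sum.inl a) 1 := by
  funext j
  simp only [Matrix.mulVec, pm, Matrix.of_apply, u, dotProduct, Fintype.sum_sum_type,
    Sum.elim_inl, Sum.elim_inr, mul_one, mul_zero, Finset.sum_const_zero, add_zero]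
  rw [Finset.sum_eq_single a]
  · by_cases h : j = Sum.inl a <;> simp [Fe, tgt, h, Pi.single_apply, eq_comm]
  · intro b _ hb
    simp [Fe, tgt, hb]
  · simp

lemma psX (p : D G) :
    (pm G (Fx G p)).mulVec (u G) = Pi.single (Sum.inr (Sum.inr p)) 1 := by
  funext j
  simp only [Matrix.mulVec, pm, Matrix.of_apply, u, dotProduct, Fintype.sum_sum_type,
    Sum.elim_inl, Sum.elim_inr, mul_one, mul_zero, Finset.sum_const_zero, add_zero]
  rw [Finset.sum_eq_single p.1.1]
  · by_cases h : j = Sum.inr (Sum.inr p) <;> simp [Fx, h, Pi.single_apply, eq_comm]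
  · intro b _ hb
    simp [Fx, hb]
  · simp

lemma psL (a : V) :
    (pm G (fun i => if i = .inl a then some (.inr (.inl a)) else none)).mulVec (u G)
      = Pi.single (Sum.inr (Sum.inl a)) 1 := by
  funext j
  simp only [Matrix.mulVec, pm, Matrix.of_apply, u, dotProduct, Fintype.sum_sum_type,
    Sum.elim_inl, Sum.elim_inr, mul_one, mul_zero, Finset.sum_const_zero, add_zero]
  rw [Finset.sum_eq_single a]
  · by_cases h : j = Sum.inr (Sum.inl a) <;> simp [h, Pi.single_apply, eq_comm]
  · intro b _ hb
    simp [hb]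
  · simp

/-- the distinguished idempotents -/
def aE (a : V) : ZigzagAlgebra ℂ G := RingQuot.mkAlgHom ℂ (ZigzagRel ℂ G) (zge ℂ G a)

/-- the distinguished arrows -/
def aX {a b : V} (h : G.Adj a b) : ZigzagAlgebra ℂ G :=
  RingQuot.mkAlgHom ℂ (ZigzagRel ℂ G) (zgx ℂ G h)

/-- the spanning family -/
def fam (n : V → V) (hn : ∀ a, G.Adj a (n a)) : I G → ZigzagAlgebra ℂ G
  | .inl a => aE G a
  | .inr (.inl a) => aX G (hn a).symm * aX G (hn a)
  | .inr (.inr p) => aX G p.2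

lemma psi_fam (n : V → V) (hn : ∀ a, G.Adj a (n a)) (i : I G) :
    psi G (fam G n hn i) = Pi.single i 1 := by
  rcases i with a | a | p
  · show (phi G (aE G a)).mulVec (u G) = _
    rw [aE, phi_mk]
    simpa [lift_zge] using psE G a
  · show (phi G _).mulVec (u G) = _
    rw [fam, map_mul, aX, aX, phi_mk, phi_mk]
    have : (FreeAlgebra.lift ℂ (rho G)) (zgx ℂ G (hn a).symm) *
        (FreeAlgebra.lift ℂ (rho G)) (zgx ℂ G (hn a)) =
        pm G (fun i => if i = .inl a then some (.inr (.inl a)) else none) := by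
      simpa [lift_zgx] using M_zigzag G (hn a)
    rw [this, psL]
  · show (phi G (aX G p.2)).mulVec (u G) = _
    rw [aX, phi_mk]
    simpa [lift_zgx] using psX G p

lemma arel {x y : FreeAlgebra ℂ (ZigzagGen G)} (h : ZigzagRel ℂ G x y) :
    RingQuot.mkAlgHom ℂ (ZigzagRel ℂ G) x = RingQuot.mkAlgHom ℂ (ZigzagRel ℂ G) y :=
  RingQuot.mkAlgHom_rel ℂ h

lemma aE_mul_self (a : V) : aE G a * aE G a = aE G a := by
  rw [aE, ← map_mul]; exact arel G (.idem a)

lemma aE_mul_aE {a b : V} (h : a ≠ b) : aE G a * aE G b = 0 := by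
  rw [aE, aE, ← map_mul]
  simpa using arel G (.orth a b h)

lemma aE_sum : (∑ a : V, aE G a) = 1 := by
  simp only [aE, ← map_sum]
  simpa using arel G .sum_one

lemma aE_mul_aX {a b : V} (h : G.Adj a b) : aE G b * aX G h = aX G h := by
  rw [aE, aX, ← map_mul]; exact arel G (.target_id h)

lemma aX_mul_aE {a b : V} (h : G.Adj a b) : aX G h * aE G a = aX G h := by
  rw [aE, aX, ← map_mul]; exact arel G (.source_id h)

lemma aE_mul_aX_zero {a b c : V} (h : G.Adj a b) (hc : c ≠ b) : aE G c * aX G h = 0 := by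
  rw [← aE_mul_aX G h, ← mul_assoc, aE_mul_aE G hc, zero_mul]

lemma aX_mul_aE_zero {a b c : V} (h : G.Adj a b) (hc : a ≠ c) : aX G h * aE G c = 0 := by
  rw [← aX_mul_aE G h, mul_assoc, aE_mul_aE G hc, mul_zero]

lemma aX_mul_aX_zero {a₁ b₁ a₂ b₂ : V} (h₁ : G.Adj a₁ b₁) (h₂ : G.Adj a₂ b₂)
    (hne : ¬(b₁ = a₂ ∧ b₂ = a₁)) : aX G h₂ * aX G h₁ = 0 := by
  by_cases hb : b₁ = a₂
  · subst hb
    have hba : b₂ ≠ a₁ := fun hh => hne ⟨rfl, hh⟩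
    rw [aX, aX, ← map_mul]
    simpa using arel G (.comp_zero h₁ h₂ hba)
  · rw [← aX_mul_aE G h₂, ← aE_mul_aX G h₁, mul_assoc, ← mul_assoc (aE G a₂),
      aE_mul_aE G (Ne.symm hb), zero_mul, mul_zero]

lemma aX_zigzag {a b c : V} (hab : G.Adj a b) (hac : G.Adj a c) :
    aX G hab.symm * aX G hab = aX G hac.symm * aX G hac := by
  rw [aX, aX, aX, aX, ← map_mul, ← map_mul]
  exact arel G (.zigzag hab hac)

lemma walk_stay {s : Set V} (hs : ∀ x ∈ s, ∀ y, G.Adj x y → y ∈ s) {v w : V}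
    (p : G.Walk v w) (hv : v ∈ s) : w ∈ s := by
  induction p with
  | nil => exact hv
  | cons h p ih => exact ih (hs _ hv _ h)

lemma exists_nb (hconn : G.Connected) (hcard : 1 < Fintype.card V) (a : V) :
    ∃ b, G.Adj a b := by
  by_contra hno
  push_neg at hno
  obtain ⟨v, hv⟩ := Fintype.exists_ne_of_one_lt_card hcard a
  obtain ⟨w⟩ := hconn.preconnected a v
  have : v ∈ ({a} : Set V) := by
    refine walk_stay G (s := {a}) ?_ w rfl
    intro x hx y hy
    rw [Set.mem_singleton_iff] at hx
    exact absurd (hx ▸ hy) (hno y)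
  exact hv this

lemma exists_other (hconn : G.Connected) (hcard : 2 < Fintype.card V) {a b : V}
    (h : G.Adj a b) : ∃ c, (G.Adj a c ∧ c ≠ b) ∨ (G.Adj b c ∧ c ≠ a) := by
  by_contra hno
  have h1 : ∀ c, G.Adj a c → c = b := by
    intro c hc
    by_contra hcb
    exact hno ⟨c, Or.inl ⟨hc, hcb⟩⟩
  have h2 : ∀ c, G.Adj b c → c = a := by
    intro c hc
    by_contra hca
    exact hno ⟨c, Or.inr ⟨hc, hca⟩⟩
  have hv : ∃ v : V, v ≠ a ∧ v ≠ b := by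
    by_contra hv
    push_neg at hv
    have hsub : (Finset.univ : Finset V) ⊆ {a, b} := by
      intro v _
      rcases eq_or_ne v a with rfl | hva
      · simp
      · simp [hv v hva]
    have h2' := Finset.card_le_card hsub
    rw [Finset.card_univ] at h2'
    have h3' : ({a, b} : Finset V).card ≤ 2 :=
      (Finset.card_insert_le a {b}).trans (by simp)
    omega
  obtain ⟨v, hva, hvb⟩ := hv
  obtain ⟨w⟩ := hconn.preconnected a v
  have : v ∈ ({a, b} : Set V) := by
    refine walk_stay G (s := {a, b}) ?_ w (Or.inl rfl)
    rintro x (rfl | rfl) y hy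
    · exact Or.inr (h1 y hy)
    · exact Or.inl (h2 y hy)
  rcases this with rfl | rfl
  · exact hva rfl
  · exact hvb rfl

lemma aX_triple (hconn : G.Connected) (hcard : 2 < Fintype.card V) {a b : V}
    (h : G.Adj a b) : aX G h * aX G h.symm * aX G h = 0 := by
  obtain ⟨c, ⟨hac, hcb⟩ | ⟨hbc, hca⟩⟩ := exists_other G hconn hcard h
  · rw [mul_assoc, aX_zigzag G h hac, ← mul_assoc,
      aX_mul_aX_zero G hac.symm h (by simp [Ne.symm hcb]), zero_mul]
  · have : aX G h * aX G h.symm = aX G hbc.symm * aX G hbc := aX_zigzag G h.symm hbc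
    rw [this, mul_assoc, aX_mul_aX_zero G h hbc (by simp [hca]), mul_zero]

lemma fam_mul_mem (hconn : G.Connected) (hcard : 2 < Fintype.card V)
    (n : V → V) (hn : ∀ a, G.Adj a (n a)) (i j : I G) :
    fam G n hn i * fam G n hn j ∈ Submodule.span ℂ (Set.range (fam G n hn)) := by
  set S := Submodule.span ℂ (Set.range (fam G n hn)) with hS
  have hmem : ∀ k, fam G n hn k ∈ S := fun k => Submodule.subset_span ⟨k, rfl⟩
  rcases i with a | a | p <;> rcases j with b | b | q
  · -- e * e
    simp only [fam]
    by_cases hab : a = b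
    · subst hab
      rw [aE_mul_self]
      exact hmem (Sum.inl a)
    · rw [aE_mul_aE G hab]
      exact S.zero_mem
  · -- e * ℓ
    simp only [fam]
    rw [← mul_assoc]
    by_cases hab : a = b
    · subst hab
      rw [aE_mul_aX G (hn a).symm]
      exact hmem (Sum.inr (Sum.inl a))
    · rw [aE_mul_aX_zero G (hn b).symm hab, zero_mul]
      exact S.zero_mem
  · -- e * x
    simp only [fam]
    by_cases hab : a = q.1.2
    · rw [hab, aE_mul_aX G q.2]
      exact hmem (Sum.inr (Sum.inr q))
    · rw [aE_mul_aX_zero G q.2 hab]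
      exact S.zero_mem
  · -- ℓ * e
    simp only [fam]
    rw [mul_assoc]
    by_cases hab : a = b
    · subst hab
      rw [aX_mul_aE G (hn a)]
      exact hmem (Sum.inr (Sum.inl a))
    · rw [aX_mul_aE_zero G (hn a) hab, mul_zero]
      exact S.zero_mem
  · -- ℓ * ℓ
    simp only [fam]
    by_cases hab : a = b
    · subst hab
      have t : aX G (hn a).symm * aX G (hn a) * aX G (hn a).symm = 0 :=
        aX_triple G hconn hcard (hn a).symm
      rw [← mul_assoc, t, zero_mul]
      exact S.zero_mem
    · rw [mul_assoc (aX G (hn a).symm), ← mul_assoc (aX G (hn a)),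
        aX_mul_aX_zero G (hn b).symm (hn a) (fun hh => hab hh.1.symm), zero_mul, mul_zero]
      exact S.zero_mem
  · -- ℓ * x
    simp only [fam]
    rcases q with ⟨⟨c, d⟩, hq⟩
    by_cases H : d = a ∧ c = n a
    · obtain ⟨rfl, rfl⟩ := H
      have t : aX G (hn d).symm * aX G (hn d) * aX G hq = 0 :=
        aX_triple G hconn hcard (hn d).symm
      rw [t]
      exact S.zero_mem
    · rw [mul_assoc, aX_mul_aX_zero G hq (hn a) (fun hh => H ⟨hh.1, hh.2.symm⟩), mul_zero]
      exact S.zero_mem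
  · -- x * e
    simp only [fam]
    by_cases hab : p.1.1 = b
    · rw [← hab, aX_mul_aE G p.2]
      exact hmem (Sum.inr (Sum.inr p))
    · rw [aX_mul_aE_zero G p.2 hab]
      exact S.zero_mem
  · -- x * ℓ
    simp only [fam]
    rcases p with ⟨⟨c, d⟩, hp⟩
    by_cases H : b = c ∧ d = n b
    · obtain ⟨rfl, rfl⟩ := H
      rw [← mul_assoc]
      have t : aX G hp * aX G (hn b).symm * aX G (hn b) = 0 :=
        aX_triple G hconn hcard (hn b)
      rw [t]
      exact S.zero_mem
    · rw [← mul_assoc, aX_mul_aX_zero G (hn b).symm hp (fun hh => H ⟨hh.1, hh.2⟩),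
        zero_mul]
      exact S.zero_mem
  · -- x * x
    simp only [fam]
    rcases p with ⟨⟨a, b⟩, hp⟩
    rcases q with ⟨⟨c, d⟩, hq⟩
    by_cases H : d = a ∧ b = c
    · obtain ⟨rfl, rfl⟩ := H
      have z : aX G hp * aX G hq = aX G (hn b).symm * aX G (hn b) :=
        aX_zigzag G hp.symm (hn b)
      rw [z]
      exact hmem (Sum.inr (Sum.inl b))
    · rw [aX_mul_aX_zero G hq hp H]
      exact S.zero_mem

lemma span_top (hconn : G.Connected) (hcard : 2 < Fintype.card V)
    (n : V → V) (hn : ∀ a, G.Adj a (n a)) :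
    Submodule.span ℂ (Set.range (fam G n hn)) = ⊤ := by
  set S := Submodule.span ℂ (Set.range (fam G n hn)) with hS
  have hmul : ∀ x ∈ S, ∀ y ∈ S, x * y ∈ S := by
    have hle : S * S ≤ S := by
      rw [hS, Submodule.span_mul_span]
      refine Submodule.span_le.2 ?_
      rintro z ⟨x, ⟨i, rfl⟩, y, ⟨j, rfl⟩, rfl⟩
      exact fam_mul_mem G hconn hcard n hn i j
    exact fun x hx y hy => hle (Submodule.mul_mem_mul hx hy)
  have hone : (1 : ZigzagAlgebra ℂ G) ∈ S := by
    rw [← aE_sum G]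
    exact Submodule.sum_mem _ fun a _ => Submodule.subset_span ⟨Sum.inl a, rfl⟩
  let T : Subalgebra ℂ (ZigzagAlgebra ℂ G) :=
    { carrier := S
      mul_mem' := fun hx hy => hmul _ hx _ hy
      one_mem' := hone
      add_mem' := fun hx hy => S.add_mem hx hy
      zero_mem' := S.zero_mem
      algebraMap_mem' := fun c => by
        rw [Algebra.algebraMap_eq_smul_one]
        exact S.smul_mem c hone }
  have hT : ∀ z : ZigzagAlgebra ℂ G, z ∈ S := by
    intro z
    obtain ⟨y, rfl⟩ := RingQuot.mkAlgHom_surjective ℂ (ZigzagRel ℂ G) z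
    induction y using FreeAlgebra.induction with
    | grade0 r =>
        rw [AlgHom.commutes]
        exact T.algebraMap_mem r
    | grade1 g =>
        rcases g with a | p
        · exact Submodule.subset_span ⟨Sum.inl a, rfl⟩
        · exact Submodule.subset_span ⟨Sum.inr (Sum.inr p), rfl⟩
    | mul x y hx hy =>
        rw [map_mul]
        exact hmul _ hx _ hy
    | add x y hx hy =>
        rw [map_add]
        exact S.add_mem hx hy
  exact eq_top_iff.2 fun z _ => hT z

end ZZ

/-- for a finite connected simple graph `Γ` with more than two vertices,
the zigzag algebra `A(Γ)` is a finite-dimensional `ℂ`-algebra of dimension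
`2·|V| + 2·|E|`. -/
theorem zigzagAlgebra_finrank {V : Type} [Fintype V] [DecidableEq V]
    (G : SimpleGraph V) [DecidableRel G.Adj]
    (hconn : G.Connected) (hcard : 2 < Fintype.card V) :
    FiniteDimensional ℂ (ZigzagAlgebra ℂ G) ∧
      Module.finrank ℂ (ZigzagAlgebra ℂ G) =
        2 * Fintype.card V + 2 * G.edgeFinset.card := by
  have hnb : ∀ a, ∃ b, G.Adj a b := ZZ.exists_nb G hconn (by omega)
  choose n hn using hnb
  have li : LinearIndependent ℂ (ZZ.fam G n hn) := by
    apply LinearIndependent.of_comp (ZZ.psi G)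
    have he : (ZZ.psi G) ∘ ZZ.fam G n hn = fun i => Pi.single i 1 :=
      funext (ZZ.psi_fam G n hn)
    rw [he]
    have hb := (Pi.basisFun ℂ (ZZ.I G)).linearIndependent
    have he2 : ⇑(Pi.basisFun ℂ (ZZ.I G)) = fun i => Pi.single i 1 := by
      funext i
      simp
    rwa [he2] at hb
  have hspan := ZZ.span_top G hconn hcard n hn
  let B : Module.Basis (ZZ.I G) ℂ (ZigzagAlgebra ℂ G) := Module.Basis.mk li hspan.ge
  have hfd : FiniteDimensional ℂ (ZigzagAlgebra ℂ G) := Module.Finite.of_basis B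
  refine ⟨hfd, ?_⟩
  rw [Module.finrank_eq_card_basis B]
  have hD : Fintype.card (ZZ.D G) = 2 * G.edgeFinset.card := by
    rw [← SimpleGraph.dart_card_eq_twice_card_edges]
    exact Fintype.card_congr
      ⟨fun p => ⟨p.1, p.2⟩, fun d => ⟨d.toProd, d.adj⟩, fun p => rfl, fun d => rfl⟩
  simp only [ZZ.I, Fintype.card_sum, hD]
  ring

end
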